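/- For every positive integer t, ∑_{r≥1} q^r · (q;q)_{r−1}(−zq;q)_{r+t−1} / ((q;q)_{r+t}(−zq;q)_r) = (1/((1+z)(1−q^t))) · ((−zq;q)_t/(q;q)_t − 1), as an identity of formal power series in z and q. -/

import Mathlib

/-- The variable `z` in the two-variable formal power series ring. -/
noncomputable def Z : MvPowerSeries (Fin 2) ℚ := MvPowerSeries.X 0

/-- The variable `q` in the two-variable formal power series ring. -/
noncomputable def Q : MvPowerSeries (Fin 2) ℚ := MvPowerSeries.X 1

/-- The exponent vector of the monomial `z^m * q^n`. -/
noncomputable def d2 (m n : ℕ) : Fin 2 →₀ ℕ := Finsupp.single 0 m + Finsupp.single 1 n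

open MvPowerSeries Finset

noncomputable def A (m : ℕ) : MvPowerSeries (Fin 2) ℚ := ∏ k ∈ Finset.range m, (1 - Q ^ (k+1))
noncomputable def B (m : ℕ) : MvPowerSeries (Fin 2) ℚ := ∏ k ∈ Finset.range m, (1 + Z * Q ^ (k+1))
noncomputable def F (t r : ℕ) : MvPowerSeries (Fin 2) ℚ := A r * B (r+t) * (A (r+t))⁻¹ * (B r)⁻¹

lemma ccQ : constantCoeff Q = 0 := constantCoeff_X 1

lemma ccA (m : ℕ) : constantCoeff (A m) = 1 := by
  rw [A, map_prod]; apply Finset.prod_eq_one; intro k _; simp [ccQ, zero_pow]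

lemma ccB (m : ℕ) : constantCoeff (B m) = 1 := by
  rw [B, map_prod]; apply Finset.prod_eq_one; intro k _; simp [ccQ, zero_pow]

lemma hAinv (m : ℕ) : A m * (A m)⁻¹ = 1 :=
  MvPowerSeries.mul_inv_cancel _ (by rw [ccA]; norm_num)

lemma hBinv (m : ℕ) : B m * (B m)⁻¹ = 1 :=
  MvPowerSeries.mul_inv_cancel _ (by rw [ccB]; norm_num)

lemma coeff_Qpow_mul (a n m : ℕ) (h : n < m) (f : MvPowerSeries (Fin 2) ℚ) :
    MvPowerSeries.coeff (d2 a n) (Q ^ m * f) = 0 := by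
  rw [Q, X_pow_eq, coeff_monomial_mul, if_neg]
  intro hle
  have := hle 1
  simp [d2, Finsupp.single_apply] at this
  omega

lemma prod_sub_one_dvd {R : Type*} [CommRing R] (q : R) (s : Finset ℕ) (f : ℕ → R)
    (h : ∀ k ∈ s, q ∣ f k - 1) : q ∣ (∏ k ∈ s, f k) - 1 := by
  classical
  induction s using Finset.induction_on with
  | empty => simp
  | insert x s' hx ih =>
    rw [Finset.prod_insert hx,
      show f x * ∏ k ∈ s', f k - 1 = (f x - 1) * ∏ k ∈ s', f k + ((∏ k ∈ s', f k) - 1) by ring]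
    exact dvd_add ((h x (Finset.mem_insert_self _ _)).mul_right _)
      (ih fun k hk => h k (Finset.mem_insert_of_mem hk))

lemma tele (t r : ℕ) :
    (1+Z)*(1-Q^t) * (Q^(r+1) * A r * B (r+t) * (A (r+1+t))⁻¹ * (B (r+1))⁻¹)
      = F t r - F t (r+1) := by
  have hD : A (r+1+t) * B (r+1) ≠ 0 := by
    have h1 : constantCoeff (A (r+1+t) * B (r+1)) = 1 := by
      rw [map_mul, ccA, ccB, one_mul]
    intro h0; rw [h0, map_zero] at h1; norm_num at h1
  apply mul_left_cancel₀ hD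
  have e1 : A (r+1+t) = A (r+t) * (1 - Q^(r+t+1)) := by
    simp only [A]; rw [show r+1+t = (r+t)+1 by omega, Finset.prod_range_succ]
  have e2 : B (r+1) = B r * (1 + Z*Q^(r+1)) := by
    simp only [B]; rw [Finset.prod_range_succ]
  have e3 : A (r+1) = A r * (1 - Q^(r+1)) := by
    simp only [A]; rw [Finset.prod_range_succ]
  have e4 : B (r+1+t) = B (r+t) * (1 + Z*Q^(r+t+1)) := by
    simp only [B]; rw [show r+1+t = (r+t)+1 by omega, Finset.prod_range_succ]
  have h3 := hAinv (r+1+t)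
  have hj := hBinv (r+1)
  have h2 := hAinv (r+t)
  have h1 := hBinv r
  rw [e1] at h3
  rw [e2] at hj
  simp only [F]
  rw [e1, e2, e3, e4]
  linear_combination
    ((B r * (1+Z*Q^(r+1)) * (B r * (1+Z*Q^(r+1)))⁻¹) *
      ((1+Z)*(1-Q^t)*Q^(r+1)*A r*B (r+t) + A r*(1-Q^(r+1))*(B (r+t)*(1+Z*Q^(r+t+1))))) * h3
    + ((1+Z)*(1-Q^t)*Q^(r+1)*A r*B (r+t) + A r*(1-Q^(r+1))*(B (r+t)*(1+Z*Q^(r+t+1)))) * hj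
    - ((B r * (B r)⁻¹) * ((1-Q^(r+t+1))*(1+Z*Q^(r+1))*A r*B (r+t))) * h2
    - ((1-Q^(r+t+1))*(1+Z*Q^(r+1))*A r*B (r+t)) * h1

theorem q_series_sum_identity (t : ℕ) (ht : 0 < t) (a n : ℕ) :
    (∑ᶠ r : ℕ, MvPowerSeries.coeff (d2 a n)
      (Q ^ (r + 1) * (∏ k ∈ Finset.range r, (1 - Q ^ (k + 1))) *
        (∏ k ∈ Finset.range (r + t), (1 + Z * Q ^ (k + 1))) *
        (∏ k ∈ Finset.range (r + 1 + t), (1 - Q ^ (k + 1)))⁻¹ *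
        (∏ k ∈ Finset.range (r + 1), (1 + Z * Q ^ (k + 1)))⁻¹)) =
    MvPowerSeries.coeff (d2 a n)
      (((1 + Z) * (1 - Q ^ t))⁻¹ *
        ((∏ k ∈ Finset.range t, (1 + Z * Q ^ (k + 1))) *
          (∏ k ∈ Finset.range t, (1 - Q ^ (k + 1)))⁻¹ - 1)) := by
  have hA_def : ∀ m, (∏ k ∈ Finset.range m, ((1:MvPowerSeries (Fin 2) ℚ) - Q ^ (k+1))) = A m :=
    fun _ => rfl
  have hB_def : ∀ m, (∏ k ∈ Finset.range m, ((1:MvPowerSeries (Fin 2) ℚ) + Z * Q ^ (k+1))) = B m :=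
    fun _ => rfl
  simp only [hA_def, hB_def]
  have hcc : constantCoeff ((1+Z)*(1-Q^t)) = 1 := by
    simp [Z, ccQ, zero_pow ht.ne']
  have hc : ((1+Z)*(1-Q^t))⁻¹ * ((1+Z)*(1-Q^t)) = 1 :=
    MvPowerSeries.inv_mul_cancel _ (by rw [hcc]; norm_num)
  have hG : ∀ r, Q^(r+1) * A r * B (r+t) * (A (r+1+t))⁻¹ * (B (r+1))⁻¹
      = ((1+Z)*(1-Q^t))⁻¹ * (F t r - F t (r+1)) := by
    intro r
    calc Q^(r+1) * A r * B (r+t) * (A (r+1+t))⁻¹ * (B (r+1))⁻¹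
        = (((1+Z)*(1-Q^t))⁻¹ * ((1+Z)*(1-Q^t))) *
            (Q^(r+1) * A r * B (r+t) * (A (r+1+t))⁻¹ * (B (r+1))⁻¹) := by rw [hc, one_mul]
      _ = ((1+Z)*(1-Q^t))⁻¹ *
            ((1+Z)*(1-Q^t) * (Q^(r+1) * A r * B (r+t) * (A (r+1+t))⁻¹ * (B (r+1))⁻¹)) := by ring
      _ = ((1+Z)*(1-Q^t))⁻¹ * (F t r - F t (r+1)) := by rw [tele]
  have hvan : ∀ r, n ≤ r → MvPowerSeries.coeff (d2 a n)
      (Q^(r+1) * A r * B (r+t) * (A (r+1+t))⁻¹ * (B (r+1))⁻¹) = 0 := by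
    intro r hr
    rw [show Q^(r+1) * A r * B (r+t) * (A (r+1+t))⁻¹ * (B (r+1))⁻¹
        = Q^(r+1) * (A r * B (r+t) * ((A (r+1+t))⁻¹ * (B (r+1))⁻¹)) by ring]
    exact coeff_Qpow_mul a n (r+1) (by omega) _
  have hsupp : (Function.support fun r => MvPowerSeries.coeff (d2 a n)
      (Q^(r+1) * A r * B (r+t) * (A (r+1+t))⁻¹ * (B (r+1))⁻¹)) ⊆ ↑(Finset.range n) := by
    intro r hr
    simp only [Function.mem_support] at hr
    simp only [Finset.coe_range, Set.mem_Iio]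
    by_contra h
    exact hr (hvan r (by omega))
  rw [finsum_eq_sum_of_support_subset _ hsupp, ← map_sum]
  have hsum : (∑ r ∈ Finset.range n, Q^(r+1) * A r * B (r+t) * (A (r+1+t))⁻¹ * (B (r+1))⁻¹)
      = ((1+Z)*(1-Q^t))⁻¹ * (F t 0 - F t n) := by
    calc (∑ r ∈ Finset.range n, Q^(r+1) * A r * B (r+t) * (A (r+1+t))⁻¹ * (B (r+1))⁻¹)
        = ∑ r ∈ Finset.range n, ((1+Z)*(1-Q^t))⁻¹ * (F t r - F t (r+1)) :=
          Finset.sum_congr rfl fun r _ => hG r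
      _ = ((1+Z)*(1-Q^t))⁻¹ * ∑ r ∈ Finset.range n, (F t r - F t (r+1)) := by
          rw [Finset.mul_sum]
      _ = ((1+Z)*(1-Q^t))⁻¹ * (F t 0 - F t n) := by rw [Finset.sum_range_sub']
  rw [hsum]
  have hB0inv : (B 0)⁻¹ = (1 : MvPowerSeries (Fin 2) ℚ) := by
    have h := hBinv 0
    have hB0 : B 0 = 1 := by simp [B]
    rwa [hB0, one_mul] at h
  have hF0 : F t 0 = B t * (A t)⁻¹ := by
    have hA0 : A 0 = 1 := by simp [A]
    simp only [F]
    rw [show 0+t = t by omega, hA0, hB0inv]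
    ring
  have hFn1 : F t n - 1 = (A (n+t))⁻¹ * (B n)⁻¹ * (A n * B (n+t) - A (n+t) * B n) := by
    simp only [F]
    linear_combination (B n * (B n)⁻¹) * hAinv (n+t) + hBinv n
  -- divisibility
  have hBsplit : B (n+t) = B n * ∏ i ∈ Finset.range t, (1 + Z * Q^(n+i+1)) := by
    simp only [B]; rw [Finset.prod_range_add]
  have hAsplit : A (n+t) = A n * ∏ i ∈ Finset.range t, (1 - Q^(n+i+1)) := by
    simp only [A]; rw [Finset.prod_range_add]
  have hp : Q^(n+1) ∣ (∏ i ∈ Finset.range t, (1 + Z * Q^(n+i+1))) - 1 :=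
    prod_sub_one_dvd _ _ _ fun k _ => ⟨Z * Q^k, by
      rw [show (1 + Z*Q^(n+k+1)) - 1 = Z * Q^(n+k+1) by ring,
        show n+k+1 = (n+1)+k by omega, pow_add]; ring⟩
  have hm : Q^(n+1) ∣ (∏ i ∈ Finset.range t, (1 - Q^(n+i+1))) - 1 :=
    prod_sub_one_dvd _ _ _ fun k _ => ⟨-Q^k, by
      rw [show (1 - Q^(n+k+1)) - 1 = -Q^(n+k+1) by ring,
        show n+k+1 = (n+1)+k by omega, pow_add]; ring⟩
  obtain ⟨w1, hw1⟩ := hp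
  obtain ⟨w2, hw2⟩ := hm
  have hW : A n * B (n+t) - A (n+t) * B n = Q^(n+1) * (A n * B n * (w1 - w2)) := by
    rw [hBsplit, hAsplit]
    linear_combination (A n * B n) * hw1 - (A n * B n) * hw2
  have hzero : MvPowerSeries.coeff (d2 a n) (((1+Z)*(1-Q^t))⁻¹ * (1 - F t n)) = 0 := by
    have h := hFn1
    rw [hW] at h
    rw [show ((1+Z)*(1-Q^t))⁻¹ * (1 - F t n)
        = Q^(n+1) * (-(((1+Z)*(1-Q^t))⁻¹ * ((A (n+t))⁻¹ * (B n)⁻¹ * (A n * B n * (w1 - w2)))))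
        by linear_combination (-(((1+Z)*(1-Q^t))⁻¹)) * h]
    exact coeff_Qpow_mul a n (n+1) (by omega) _
  rw [show ((1+Z)*(1-Q^t))⁻¹ * (F t 0 - F t n)
      = ((1+Z)*(1-Q^t))⁻¹ * (F t 0 - 1) + ((1+Z)*(1-Q^t))⁻¹ * (1 - F t n) by ring,
    map_add, hzero, add_zero, hF0]
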